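/- arXiv:1212.1735 — 5 statements merged into one kernel-verified Lean document; each statement's English description precedes it below -/
import Mathlib

section
/- Under the layered-network construction, assume additionally that the attachment maps are surjective, i.e., for every index i, every vertex of the center C_i equals c_i(v) for some v ∈ M. Then the graph G is k-vertex-connected: |V| > k, and for every set S of vertices with |S| ≤ k − 1, the subgraph of G induced on V \ S is connected. -/
/-- Under the layered-network construction with surjective attachment
maps, the graph `G` is `k`-vertex-connected: `|V| > k` and deleting any set `S` of
at most `k - 1` vertices leaves a connected induced subgraph. -/
theorem layered_network_k_connected
    {V : Type} [Fintype V] [DecidableEq V]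
    (k : ℕ) (hk : 1 ≤ k)
    (C : Fin k → Finset V) (M : Finset V)
    (hCcard : ∀ i : Fin k, (C i).card = k + 1)
    (hMcard : k ≤ M.card)
    (hCC : ∀ i j : Fin k, i ≠ j → Disjoint (C i) (C j))
    (hCM : ∀ i : Fin k, Disjoint (C i) M)
    (hcover : ∀ v : V, v ∈ M ∨ ∃ i : Fin k, v ∈ C i)
    (c : V → Fin k → V)
    (hc : ∀ v ∈ M, ∀ i : Fin k, c v i ∈ C i)
    (G : SimpleGraph V)
    (hAdj : ∀ x y : V, G.Adj x y ↔
      ((x ≠ y ∧ ∃ i : Fin k, x ∈ C i ∧ y ∈ C i) ∨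
        (∃ v ∈ M, ∃ i : Fin k, (x = v ∧ y = c v i) ∨ (y = v ∧ x = c v i))))
    (hsurj : ∀ i : Fin k, ∀ x ∈ C i, ∃ v ∈ M, c v i = x) :
    k < Fintype.card V ∧
      ∀ S : Finset V, S.card ≤ k - 1 →
        (G.induce {v : V | v ∉ S}).Connected := by
  constructor
  · have hi : (C ⟨0, hk⟩).card = k + 1 := hCcard _
    calc k < k + 1 := Nat.lt_succ_self k
      _ = (C ⟨0, hk⟩).card := hi.symm
      _ ≤ Fintype.card V := Finset.card_le_univ _
  · intro S hS
    set T : Set V := {v : V | v ∉ S} with hT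
    -- adjacency helpers
    have hadjC : ∀ i : Fin k, ∀ x ∈ C i, ∀ y ∈ C i, x ≠ y → G.Adj x y := by
      intro i x hx y hy hne
      exact (hAdj x y).mpr (Or.inl ⟨hne, i, hx, hy⟩)
    have hadjM : ∀ v ∈ M, ∀ i : Fin k, G.Adj v (c v i) := by
      intro v hv i
      exact (hAdj v (c v i)).mpr (Or.inr ⟨v, hv, i, Or.inl ⟨rfl, rfl⟩⟩)
    have step : ∀ (x y : V) (hx : x ∈ T) (hy : y ∈ T), G.Adj x y →
        (G.induce T).Reachable ⟨x, hx⟩ ⟨y, hy⟩ := by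
      intro x y hx hy h
      exact SimpleGraph.Adj.reachable h
    -- find an untouched center
    have hex : ∃ i₀ : Fin k, Disjoint (C i₀) S := by
      by_contra h
      push_neg at h
      have hchoice : ∀ i : Fin k, ∃ x, x ∈ C i ∧ x ∈ S := by
        intro i
        exact Finset.not_disjoint_iff.mp (h i)
      choose g hg1 hg2 using hchoice
      have hinj : Function.Injective g := by
        intro i j hij
        by_contra hne
        exact Finset.disjoint_left.mp (hCC i j hne) (hg1 i) (hij ▸ hg1 j)
      have hle : Fintype.card (Fin k) ≤ S.card := by
        have hsub : Finset.image g Finset.univ ⊆ S := by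
          intro x hx
          simp only [Finset.mem_image] at hx
          obtain ⟨i, _, rfl⟩ := hx
          exact hg2 i
        calc Fintype.card (Fin k) = (Finset.univ : Finset (Fin k)).card := rfl
          _ = (Finset.image g Finset.univ).card :=
              (Finset.card_image_of_injective _ hinj).symm
          _ ≤ S.card := Finset.card_le_card hsub
      simp only [Fintype.card_fin] at hle
      omega
    obtain ⟨i₀, hi₀⟩ := hex
    -- base vertex
    obtain ⟨b, hb⟩ : (C i₀).Nonempty := by
      rw [← Finset.card_pos, hCcard i₀]; omega
    have hbT : b ∈ T := Finset.disjoint_left.mp hi₀ hb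
    -- reach from any point of C i₀ to b
    have reachC0 : ∀ (x : V) (hx : x ∈ C i₀) (hxT : x ∈ T),
        (G.induce T).Reachable ⟨x, hxT⟩ ⟨b, hbT⟩ := by
      intro x hx hxT
      by_cases hxb : x = b
      · subst hxb; rfl
      · exact step x b hxT hbT (hadjC i₀ x hx b hb hxb)
    -- reach from any user to b
    have reachM : ∀ (v : V) (hv : v ∈ M) (hvT : v ∈ T),
        (G.induce T).Reachable ⟨v, hvT⟩ ⟨b, hbT⟩ := by
      intro v hv hvT
      have hy : c v i₀ ∈ C i₀ := hc v hv i₀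
      have hyT : c v i₀ ∈ T := Finset.disjoint_left.mp hi₀ hy
      exact (step v (c v i₀) hvT hyT (hadjM v hv i₀)).trans (reachC0 _ hy hyT)
    -- reach from anywhere
    have reachB : ∀ (x : V) (hx : x ∈ T),
        (G.induce T).Reachable ⟨x, hx⟩ ⟨b, hbT⟩ := by
      intro x hx
      rcases hcover x with hxM | ⟨j, hxC⟩
      · exact reachM x hxM hx
      · -- find surviving pair (y, u) with y ∈ C j, c u j = y
        have hpair : ∃ y, y ∈ C j ∧ y ∉ S ∧ ∃ v, v ∈ M ∧ v ∉ S ∧ c v j = y := by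
          by_contra hno
          push_neg at hno
          classical
          let u : V → V := fun y => if h : y ∈ C j then (hsurj j y h).choose else y
          have hu1 : ∀ y ∈ C j, u y ∈ M := by
            intro y hy
            simp only [u, dif_pos hy]
            exact (hsurj j y hy).choose_spec.1
          have hu2 : ∀ y ∈ C j, c (u y) j = y := by
            intro y hy
            simp only [u, dif_pos hy]
            exact (hsurj j y hy).choose_spec.2
          have himg : ∀ y ∈ C j, (if y ∈ S then y else u y) ∈ S := by
            intro y hy
            by_cases hyS : y ∈ S
            · simp [hyS]
            · simp only [if_neg hyS]
              by_contra huS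
              exact hno y hy hyS (u y) (hu1 y hy) huS (hu2 y hy)
          have hinjF : Set.InjOn (fun y => if y ∈ S then y else u y) (C j) := by
            intro y₁ hy₁ y₂ hy₂ heq
            simp only at heq
            by_cases h1 : y₁ ∈ S <;> by_cases h2 : y₂ ∈ S
            · simpa [h1, h2] using heq
            · rw [if_pos h1, if_neg h2] at heq
              exact absurd (heq ▸ hu1 y₂ hy₂) (Finset.disjoint_left.mp (hCM j) hy₁)
            · rw [if_neg h1, if_pos h2] at heq
              exact absurd (heq ▸ hu1 y₁ hy₁) fun hm =>
                Finset.disjoint_left.mp (hCM j) hy₂ hm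
            · rw [if_neg h1, if_neg h2] at heq
              rw [← hu2 y₁ hy₁, ← hu2 y₂ hy₂, heq]
          have hcard : (C j).card ≤ S.card := by
            apply Finset.card_le_card_of_injOn _ himg hinjF
          rw [hCcard j] at hcard
          omega
        obtain ⟨y, hyC, hyS, v, hvM, hvS, hcv⟩ := hpair
        have hyT : y ∈ T := hyS
        have hvT : v ∈ T := hvS
        have r1 : (G.induce T).Reachable ⟨x, hx⟩ ⟨y, hyT⟩ := by
          by_cases hxy : x = y
          · subst hxy; rfl
          · exact step x y hx hyT (hadjC j x hxC y hyC hxy)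
        have r2 : (G.induce T).Reachable ⟨y, hyT⟩ ⟨v, hvT⟩ := by
          apply step
          have := hadjM v hvM j
          rw [hcv] at this
          exact this.symm
        exact (r1.trans r2).trans (reachM v hvM hvT)
    rw [SimpleGraph.connected_iff]
    refine ⟨fun x y => (reachB x.val x.2).trans (reachB y.val y.2).symm, ⟨⟨b, hbT⟩⟩⟩
end

section
/- (Case 2) Under the layered-network construction, let a ∈ C_i and b ∈ C_j be vertices in two distinct centers (i ≠ j), and let S ⊆ M be any set of user nodes with |S| ≤ k − 1. Then a and b are connected in the subgraph of G induced on V \ S. -/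
/-- Case 2: vertices `a ∈ C i` and `b ∈ C j` of two distinct centers
remain connected after deleting any set `S ⊆ M` of at most `k - 1` user nodes. -/
theorem layered_network_two_centers_delete_users
    {V : Type} [Fintype V] [DecidableEq V]
    (k : ℕ) (hk : 1 ≤ k)
    (C : Fin k → Finset V) (M : Finset V)
    (hCcard : ∀ i : Fin k, (C i).card = k + 1)
    (hMcard : k ≤ M.card)
    (hCC : ∀ i j : Fin k, i ≠ j → Disjoint (C i) (C j))
    (hCM : ∀ i : Fin k, Disjoint (C i) M)
    (hcover : ∀ v : V, v ∈ M ∨ ∃ i : Fin k, v ∈ C i)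
    (c : V → Fin k → V)
    (hc : ∀ v ∈ M, ∀ i : Fin k, c v i ∈ C i)
    (G : SimpleGraph V)
    (hAdj : ∀ x y : V, G.Adj x y ↔
      ((x ≠ y ∧ ∃ i : Fin k, x ∈ C i ∧ y ∈ C i) ∨
        (∃ v ∈ M, ∃ i : Fin k, (x = v ∧ y = c v i) ∨ (y = v ∧ x = c v i))))
    (i j : Fin k) (hij : i ≠ j) (a b : V) (ha : a ∈ C i) (hb : b ∈ C j)
    (S : Finset V) (hSM : S ⊆ M) (hScard : S.card ≤ k - 1)
    (haS : a ∉ S) (hbS : b ∉ S) :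
    (G.induce {v : V | v ∉ S}).Reachable ⟨a, haS⟩ ⟨b, hbS⟩ := by
  classical
  -- pick a user node outside S
  have hlt : S.card < M.card :=
    lt_of_le_of_lt hScard (lt_of_lt_of_le (Nat.sub_lt hk one_pos) hMcard)
  have hss : S ⊂ M := hSM.ssubset_of_ne (by rintro rfl; exact lt_irrefl _ hlt)
  obtain ⟨v, hvM, hvS⟩ := Finset.exists_of_ssubset hss
  set x := c v i with hx
  set y := c v j with hy
  have hxC : x ∈ C i := hc v hvM i
  have hyC : y ∈ C j := hc v hvM j
  have hxS : x ∉ S := fun h => Finset.disjoint_left.mp (hCM i) hxC (hSM h)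
  have hyS : y ∉ S := fun h => Finset.disjoint_left.mp (hCM j) hyC (hSM h)
  -- reachability within a center
  have center : ∀ (t : Fin k) (p q : V) (hp : p ∈ C t) (hq : q ∈ C t)
      (hpS : p ∉ S) (hqS : q ∉ S),
      (G.induce {v : V | v ∉ S}).Reachable ⟨p, hpS⟩ ⟨q, hqS⟩ := by
    intro t p q hp hq hpS hqS
    by_cases hpq : p = q
    · subst hpq; exact SimpleGraph.Reachable.refl _
    · refine SimpleGraph.Adj.reachable ?_
      show G.Adj p q
      exact (hAdj p q).mpr (Or.inl ⟨hpq, t, hp, hq⟩)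
  -- edges from v to its attachment points
  have hvx : (G.induce {v : V | v ∉ S}).Adj ⟨x, hxS⟩ ⟨v, hvS⟩ := by
    show G.Adj x v
    exact (hAdj x v).mpr (Or.inr ⟨v, hvM, i, Or.inr ⟨rfl, rfl⟩⟩)
  have hvy : (G.induce {v : V | v ∉ S}).Adj ⟨v, hvS⟩ ⟨y, hyS⟩ := by
    show G.Adj v y
    exact (hAdj v y).mpr (Or.inr ⟨v, hvM, j, Or.inl ⟨rfl, rfl⟩⟩)
  exact ((center i a x ha hxC haS hxS).trans hvx.reachable).trans
    (hvy.reachable.trans (center j y b hyC hb hyS hbS))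
end

section
/- (Case 4, deletion form) Under the layered-network construction, let a and b be two distinct user nodes in M, and let S ⊆ V \ {a, b} be any set of vertices with |S| ≤ k − 1. Then a and b are connected in the subgraph of G induced on V \ S. -/
/-- Case 4, deletion form: two distinct user nodes `a, b ∈ M` remain
connected after deleting any set `S ⊆ V \ {a, b}` of at most `k - 1` vertices. -/
theorem layered_network_two_users_delete_vertices
    {V : Type} [Fintype V] [DecidableEq V]
    (k : ℕ) (hk : 1 ≤ k)
    (C : Fin k → Finset V) (M : Finset V)
    (hCcard : ∀ i : Fin k, (C i).card = k + 1)
    (hMcard : k ≤ M.card)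
    (hCC : ∀ i j : Fin k, i ≠ j → Disjoint (C i) (C j))
    (hCM : ∀ i : Fin k, Disjoint (C i) M)
    (hcover : ∀ v : V, v ∈ M ∨ ∃ i : Fin k, v ∈ C i)
    (c : V → Fin k → V)
    (hc : ∀ v ∈ M, ∀ i : Fin k, c v i ∈ C i)
    (G : SimpleGraph V)
    (hAdj : ∀ x y : V, G.Adj x y ↔
      ((x ≠ y ∧ ∃ i : Fin k, x ∈ C i ∧ y ∈ C i) ∨
        (∃ v ∈ M, ∃ i : Fin k, (x = v ∧ y = c v i) ∨ (y = v ∧ x = c v i))))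
    (a b : V) (ha : a ∈ M) (hb : b ∈ M) (hab : a ≠ b)
    (S : Finset V) (hScard : S.card ≤ k - 1)
    (haS : a ∉ S) (hbS : b ∉ S) :
    (G.induce {v : V | v ∉ S}).Reachable ⟨a, haS⟩ ⟨b, hbS⟩ := by
  classical
  -- bad indices: those whose attachment vertices for a or b are deleted
  set T : Finset (Fin k) := Finset.univ.filter (fun i => c a i ∈ S ∨ c b i ∈ S) with hT
  have hTcard : T.card ≤ S.card := by
    apply Finset.card_le_card_of_injOn (fun i => if c a i ∈ S then c a i else c b i)
    · intro i hi
      simp only [hT, Finset.mem_coe, Finset.mem_filter] at hi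
      by_cases h : c a i ∈ S
      · simpa [h]
      · simpa [h] using hi.2.resolve_left h
    · intro i hi j hj hij
      by_contra hne
      have hiC : (if c a i ∈ S then c a i else c b i) ∈ C i := by
        by_cases h : c a i ∈ S <;> simp [h, hc a ha i, hc b hb i]
      have hjC : (if c a j ∈ S then c a j else c b j) ∈ C j := by
        by_cases h : c a j ∈ S <;> simp [h, hc a ha j, hc b hb j]
      have hij' : (if c a i ∈ S then c a i else c b i) = (if c a j ∈ S then c a j else c b j) := hij
      rw [hij'] at hiC
      exact Finset.disjoint_left.mp (hCC i j hne) hiC hjC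
  have hTlt : T.card < k := lt_of_le_of_lt (hTcard.trans hScard)
    (Nat.sub_lt (lt_of_lt_of_le Nat.zero_lt_one hk) Nat.one_pos)
  have : ∃ i : Fin k, i ∉ T := by
    by_contra h
    push_neg at h
    have : T = Finset.univ := Finset.eq_univ_of_forall h
    rw [this, Finset.card_univ, Fintype.card_fin] at hTlt
    exact lt_irrefl _ hTlt
  obtain ⟨i, hi⟩ := this
  simp only [hT, Finset.mem_filter, Finset.mem_univ, true_and, not_or] at hi
  obtain ⟨hcaS, hcbS⟩ := hi
  have hcaM : c a i ∉ M := Finset.disjoint_left.mp (hCM i) (hc a ha i)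
  have hcbM : c b i ∉ M := Finset.disjoint_left.mp (hCM i) (hc b hb i)
  -- adjacency facts in G
  have hGa : G.Adj a (c a i) := by
    rw [hAdj]; exact Or.inr ⟨a, ha, i, Or.inl ⟨rfl, rfl⟩⟩
  have hGb : G.Adj (c b i) b := by
    rw [hAdj]; exact Or.inr ⟨b, hb, i, Or.inr ⟨rfl, rfl⟩⟩
  -- lift adjacency to induced subgraph
  have key : ∀ (x y : V) (hx : x ∉ S) (hy : y ∉ S), G.Adj x y →
      (G.induce {v : V | v ∉ S}).Adj ⟨x, hx⟩ ⟨y, hy⟩ := by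
    intro x y hx hy h
    exact h
  by_cases heq : c a i = c b i
  · have h1 := key a (c b i) haS hcbS (heq ▸ hGa)
    have h2 := key (c b i) b hcbS hbS hGb
    exact (h1.reachable).trans h2.reachable
  · have hGm : G.Adj (c a i) (c b i) := by
      rw [hAdj]; exact Or.inl ⟨heq, i, hc a ha i, hc b hb i⟩
    have h1 := key a (c a i) haS hcaS hGa
    have h2 := key (c a i) (c b i) hcaS hcbS hGm
    have h3 := key (c b i) b hcbS hbS hGb
    exact (h1.reachable).trans ((h2.reachable).trans h3.reachable)
end

section
/- Let G be a connected simple graph on a finite vertex set V, and let D be a connected dominating set of G. Then G has a spanning tree with at least |V| − |D| leaves. -/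
open SimpleGraph

private lemma preconnected_of_adj_reachable {W : Type*} {H H' : SimpleGraph W}
    (hH : H.Preconnected) (h : ∀ a b, H.Adj a b → H'.Reachable a b) : H'.Preconnected := by
  intro x y
  have hr := (reachable_iff_reflTransGen x y).mp (hH x y)
  induction hr with
  | refl => exact Reachable.refl x
  | tail _ hab ih => exact ih.trans (h _ _ hab)

private lemma exists_spanning_tree_aux {W : Type*} [Fintype W] :
    ∀ (n : ℕ) (H : SimpleGraph W), H.edgeSet.ncard ≤ n → H.Connected →
      ∃ T : SimpleGraph W, T ≤ H ∧ T.Connected ∧ T.IsAcyclic := by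
  intro n
  induction n with
  | zero =>
    intro H hcard hconn
    refine ⟨H, le_refl _, hconn, ?_⟩
    intro v p hp
    cases p with
    | nil => exact hp.ne_nil rfl
    | cons h q =>
      have : (0 : ℕ) < H.edgeSet.ncard :=
        Set.ncard_pos (Set.toFinite _) |>.mpr ⟨s(v, _), h⟩
      omega
  | succ n ih =>
    intro H hcard hconn
    by_cases hac : H.IsAcyclic
    · exact ⟨H, le_refl _, hconn, hac⟩
    · rw [isAcyclic_iff_forall_adj_isBridge] at hac
      push_neg at hac
      obtain ⟨v, w, hvw, hbr⟩ := hac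
      rw [isBridge_iff] at hbr
      push_neg at hbr
      have hreach : (H \ fromEdgeSet {s(v, w)}).Reachable v w := hbr
      set H' := H.deleteEdges {s(v, w)} with hH'
      have hH'eq : H' = H \ fromEdgeSet {s(v, w)} := rfl
      have hle : H' ≤ H := deleteEdges_le _
      have hconn' : H'.Connected := by
        have : Nonempty W := hconn.nonempty
        refine ⟨preconnected_of_adj_reachable hconn.1 ?_⟩
        intro a b hab
        by_cases he : s(a, b) = s(v, w)
        · rw [Sym2.eq_iff] at he
          rcases he with ⟨rfl, rfl⟩ | ⟨rfl, rfl⟩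
          · exact hH'eq ▸ hreach
          · exact (hH'eq ▸ hreach).symm
        · exact Adj.reachable (by simp [hH', he, hab])
      have hcard' : H'.edgeSet.ncard ≤ n := by
        have : H'.edgeSet = H.edgeSet \ {s(v, w)} := edgeSet_deleteEdges _
        have hmem : s(v, w) ∈ H.edgeSet := hvw
        have hfin : H.edgeSet.Finite := Set.toFinite _
        have hlt : H'.edgeSet.ncard < H.edgeSet.ncard := by
          rw [this]
          exact Set.ncard_lt_ncard (Set.sdiff_singleton_ssubset.mpr hmem) hfin
        omega
      obtain ⟨T, hT1, hT2, hT3⟩ := ih H' hcard' hconn'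
      exact ⟨T, hT1.trans hle, hT2, hT3⟩

private lemma exists_spanning_tree {W : Type*} [Fintype W] (H : SimpleGraph W)
    (hH : H.Connected) : ∃ T : SimpleGraph W, T ≤ H ∧ T.Connected ∧ T.IsAcyclic :=
  exists_spanning_tree_aux H.edgeSet.ncard H le_rfl hH

/-- if `D` is a connected dominating set of a connected graph `G`,
then `G` has a spanning tree with at least `|V| - |D|` leaves. -/
theorem spanning_tree_many_leaves_of_cds
    {V : Type} [Fintype V] [DecidableEq V]
    (G : SimpleGraph V) (hG : G.Connected)
    (D : Finset V) (hD : D.Nonempty)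
    (hDconn : (G.induce (↑D : Set V)).Connected)
    (hDdom : ∀ v : V, v ∉ D → ∃ w ∈ D, G.Adj v w) :
    ∃ T : SimpleGraph V, T ≤ G ∧ T.Connected ∧ T.IsAcyclic ∧
      Fintype.card V - D.card ≤ ({v : V | (T.neighborSet v).ncard = 1} : Set V).ncard := by
  classical
  choose f hf1 hf2 using hDdom
  set g : V → V := fun v => if h : v ∈ D then v else f v h with hg
  have hgD : ∀ v : V, g v ∈ D := by
    intro v
    by_cases h : v ∈ D <;> simp [hg, h, hf1]
  have hgadj : ∀ v : V, v ∉ D → G.Adj v (g v) := by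
    intro v h
    simp [hg, h, hf2]
  let T0 : SimpleGraph V :=
    { Adj := fun a b => (a ∈ D ∧ b ∈ D ∧ G.Adj a b) ∨ (a ∉ D ∧ b = g a) ∨ (b ∉ D ∧ a = g b)
      symm := by
        constructor
        rintro a b (⟨h1, h2, h3⟩ | ⟨h1, h2⟩ | ⟨h1, h2⟩)
        · exact Or.inl ⟨h2, h1, h3.symm⟩
        · exact Or.inr (Or.inr ⟨h1, h2⟩)
        · exact Or.inr (Or.inl ⟨h1, h2⟩)
      loopless := by
        constructor
        rintro a (⟨h1, h2, h3⟩ | ⟨h1, h2⟩ | ⟨h1, h2⟩)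
        · exact G.loopless.irrefl a h3
        · exact h1 (h2 ▸ hgD a)
        · exact h1 (h2 ▸ hgD a) }
  have hT0le : T0 ≤ G := by
    rintro a b (⟨h1, h2, h3⟩ | ⟨h1, h2⟩ | ⟨h1, h2⟩)
    · exact h3
    · exact h2 ▸ hgadj a h1
    · exact (h2 ▸ hgadj b h1).symm
  have hNV : Nonempty V := ⟨hD.choose⟩
  obtain ⟨r, hr⟩ := hD
  have hreachD : ∀ x : V, x ∈ D → T0.Reachable x r := by
    intro x hx
    let φ : (G.induce (↑D : Set V)) →g T0 :=
      ⟨Subtype.val, fun {a b} hab => Or.inl ⟨a.2, b.2, hab⟩⟩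
    exact (hDconn.preconnected ⟨x, hx⟩ ⟨r, hr⟩).map φ
  have hreach : ∀ x : V, T0.Reachable x r := by
    intro x
    by_cases hx : x ∈ D
    · exact hreachD x hx
    · have hadj : T0.Adj x (g x) := Or.inr (Or.inl ⟨hx, rfl⟩)
      exact hadj.reachable.trans (hreachD (g x) (hgD x))
  have hT0conn : T0.Connected := ⟨fun x y => (hreach x).trans (hreach y).symm⟩
  obtain ⟨T, hT1, hT2, hT3⟩ := exists_spanning_tree T0 hT0conn
  refine ⟨T, hT1.trans hT0le, hT2, hT3, ?_⟩
  have hleaf : ∀ v : V, v ∉ D → T.neighborSet v = {g v} := by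
    intro v hv
    have hsub : T.neighborSet v ⊆ {g v} := by
      intro u hu
      rcases hT1 hu with ⟨h1, _, _⟩ | ⟨_, h2⟩ | ⟨h1, h2⟩
      · exact absurd h1 hv
      · exact h2
      · exact absurd (h2 ▸ hgD u) (h2 ▸ hv)
    have hne : v ≠ g v := fun h => hv (h ▸ hgD v)
    obtain ⟨p⟩ := hT2.preconnected v (g v)
    have hpn : ¬ p.Nil := Walk.not_nil_of_ne hne
    have hmem : p.getVert 1 ∈ T.neighborSet v := p.adj_snd hpn
    refine subset_antisymm hsub ?_
    have h1 := hsub hmem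
    simp only [Set.mem_singleton_iff] at h1
    exact Set.singleton_subset_iff.mpr (h1 ▸ hmem)
  have hsub : (↑(Dᶜ) : Set V) ⊆ {v : V | (T.neighborSet v).ncard = 1} := by
    intro v hv
    have hv' : v ∉ D := by simpa using hv
    simp only [Set.mem_setOf_eq, hleaf v hv', Set.ncard_singleton]
  calc Fintype.card V - D.card = (Dᶜ : Finset V).card := (Finset.card_compl _).symm
    _ = (↑(Dᶜ : Finset V) : Set V).ncard := (Set.ncard_coe_finset _).symm
    _ ≤ _ := Set.ncard_le_ncard hsub (Set.toFinite _)
end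

section
/- (Equivalence of maximum leaf spanning tree and minimum connected dominating set) Let G be a connected simple graph on a finite vertex set V with n = |V| ≥ 3, and let ℓ be a natural number with 2 ≤ ℓ ≤ n − 1. Then G has a spanning tree with at least ℓ leaves if and only if G has a connected dominating set of cardinality at most n − ℓ. -/
open SimpleGraph

/-- Deleting a non-bridge edge of a cycle preserves reachability everywhere. -/
private lemma reach_of_del {V : Type} {G : SimpleGraph V} {v w : V}
    (hr : (G \ fromEdgeSet {s(v, w)}).Reachable v w) {x y : V} (p : G.Walk x y) :
    (G \ fromEdgeSet {s(v, w)}).Reachable x y := by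
  induction p with
  | nil => exact Reachable.refl _
  | @cons a b c h q ih =>
    refine Reachable.trans ?_ ih
    by_cases he : s(a, b) = s(v, w)
    · rw [Sym2.eq_iff] at he
      rcases he with ⟨rfl, rfl⟩ | ⟨rfl, rfl⟩
      · exact hr
      · exact hr.symm
    · exact Adj.reachable (by simp [sdiff_adj, h, he])

private lemma exists_tree_le {V : Type} [Fintype V] (G : SimpleGraph V)
    (hG : G.Connected) : ∃ T : SimpleGraph V, T ≤ G ∧ T.Connected ∧ T.IsAcyclic := by
  classical
  obtain ⟨n, hn⟩ : ∃ n, G.edgeSet.ncard = n := ⟨_, rfl⟩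
  induction n using Nat.strong_induction_on generalizing G with
  | _ n ih =>
    by_cases hac : G.IsAcyclic
    · exact ⟨G, le_refl _, hG, hac⟩
    · simp only [IsAcyclic, not_forall, not_not] at hac
      obtain ⟨u, c, hc⟩ := hac
      have hne : c.edges ≠ [] := by
        intro h
        have := hc.ne_nil
        cases c with
        | nil => exact this rfl
        | cons h' q => simp [SimpleGraph.Walk.edges_cons] at h
      obtain ⟨e, he⟩ := List.exists_mem_of_ne_nil _ hne
      induction e using Sym2.ind with
      | _ v w =>
      have hvw : G.Adj v w ∧ (G \ fromEdgeSet {s(v, w)}).Reachable v w :=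
        (adj_and_reachable_delete_edges_iff_exists_cycle).2 ⟨u, c, hc, he⟩
      set G' := G \ fromEdgeSet {s(v, w)} with hG'
      have hle : G' ≤ G := sdiff_le
      have hconn : G'.Connected := by
        rw [connected_iff] at hG ⊢
        refine ⟨fun x y => ?_, hG.2⟩
        obtain ⟨p⟩ := hG.1 x y
        exact reach_of_del hvw.2 p
      have hcard : G'.edgeSet.ncard < n := by
        rw [← hn]
        have hsub : G'.edgeSet ⊂ G.edgeSet := by
          rw [hG']
          constructor
          · exact edgeSet_mono hle
          · intro hsup
            have : s(v, w) ∈ G'.edgeSet := hsup hvw.1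
            simp [hG', edgeSet_sdiff] at this
        exact Set.ncard_lt_ncard hsub (Set.toFinite _)
      obtain ⟨T, hT1, hT2, hT3⟩ := ih _ hcard G' hconn rfl
      exact ⟨T, le_trans hT1 hle, hT2, hT3⟩


/-- A walk whose support lies in `s` yields reachability in the induced graph. -/
private lemma reach_induce {V : Type} {G : SimpleGraph V} {s : Set V} {x y : V}
    (p : G.Walk x y) (hp : ∀ z ∈ p.support, z ∈ s) (hx : x ∈ s) (hy : y ∈ s) :
    (G.induce s).Reachable ⟨x, hx⟩ ⟨y, hy⟩ := by
  induction p with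
  | nil => exact Reachable.refl _
  | @cons a b c h q ih =>
    have hb : b ∈ s := hp b (by simp)
    refine Reachable.trans (Adj.reachable ?_) (ih (fun z hz => hp z (by simp [hz])) hb hy)
    simp [comap_adj, h]

/-- In a connected graph on at least two vertices every vertex has a neighbor. -/
private lemma nbr_nonempty {V : Type} [Fintype V] {T : SimpleGraph V}
    (hT : T.Connected) (h2 : 2 ≤ Fintype.card V) (v : V) :
    (T.neighborSet v).Nonempty := by
  obtain ⟨u, hu⟩ := Fintype.exists_ne_of_one_lt_card (by omega) v
  obtain ⟨p⟩ := hT v u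
  cases p with
  | nil => exact absurd rfl hu.symm
  | cons h q => exact ⟨_, h⟩

/-- An interior vertex of a path has at least two neighbors. -/
private lemma interior_two_nbrs {V : Type} {T : SimpleGraph V} {u v : V}
    (p : T.Walk u v) (hp : p.IsPath) {z : V} (hz : z ∈ p.support)
    (h1 : (T.neighborSet z).ncard = 1) : z = u ∨ z = v := by
  induction p with
  | nil => simp at hz; exact Or.inl hz
  | @cons a b c h q ih =>
    rw [SimpleGraph.Walk.cons_isPath_iff] at hp
    rw [SimpleGraph.Walk.support_cons, List.mem_cons] at hz
    rcases hz with rfl | hz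
    · exact Or.inl rfl
    rcases ih hp.1 hz with rfl | rfl
    · -- z = b : second vertex; show b = c or contradiction
      by_cases hbc : z = c
      · exact Or.inr hbc
      · exfalso
        cases q with
        | nil => exact hbc rfl
        | @cons _ d _ h2 q2 =>
          obtain ⟨x, hx⟩ := Set.ncard_eq_one.1 h1
          have hax : a = x := by
            have : a ∈ T.neighborSet z := h.symm
            rwa [hx, Set.mem_singleton_iff] at this
          have hdx : d = x := by
            have : d ∈ T.neighborSet z := h2
            rwa [hx, Set.mem_singleton_iff] at this
          have : a ∈ (SimpleGraph.Walk.cons h2 q2).support := by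
            rw [hax, ← hdx]
            simp
          exact hp.2 this
    · exact Or.inr rfl


open SimpleGraph in
/-- a connected graph `G` on `n ≥ 3` vertices has a spanning tree
with at least `ℓ` leaves (`2 ≤ ℓ ≤ n - 1`) iff it has a connected dominating set
of cardinality at most `n - ℓ`. -/
theorem maxleaf_iff_cds
    {V : Type} [Fintype V] [DecidableEq V]
    (G : SimpleGraph V) (hG : G.Connected) (hcard : 3 ≤ Fintype.card V)
    (l : ℕ) (hl2 : 2 ≤ l) (hln : l ≤ Fintype.card V - 1) :
    (∃ T : SimpleGraph V, T ≤ G ∧ T.Connected ∧ T.IsAcyclic ∧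
        l ≤ ({v : V | (T.neighborSet v).ncard = 1} : Set V).ncard) ↔
      (∃ D : Finset V, D.Nonempty ∧ (G.induce (↑D : Set V)).Connected ∧
        (∀ v : V, v ∉ D → ∃ w ∈ D, G.Adj v w) ∧
        D.card ≤ Fintype.card V - l) := by
  constructor
  · -- forward direction
    classical
    rintro ⟨T, hTG, hTc, hTa, hTl⟩
    set D : Finset V := Finset.univ.filter (fun v => (T.neighborSet v).ncard ≠ 1) with hD
    have hmemD : ∀ v, v ∈ D ↔ (T.neighborSet v).ncard ≠ 1 := by
      intro v; simp [hD]
    -- every leaf's neighbor is a non-leaf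
    have key : ∀ v, (T.neighborSet v).ncard = 1 →
        ∃ w, T.neighborSet v = {w} ∧ (T.neighborSet w).ncard ≠ 1 := by
      intro v hv
      obtain ⟨w, hw⟩ := Set.ncard_eq_one.1 hv
      refine ⟨w, hw, ?_⟩
      intro hw1
      have hadj : T.Adj v w := by
        have : w ∈ T.neighborSet v := by rw [hw]; rfl
        exact this
      obtain ⟨x, hx⟩ := Set.ncard_eq_one.1 hw1
      have hxv : x = v := by
        have : v ∈ T.neighborSet w := hadj.symm
        rw [hx, Set.mem_singleton_iff] at this; exact this.symm
      rw [hxv] at hx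
      clear hxv
      -- get a third vertex
      obtain ⟨y, hyv, hyw⟩ : ∃ y, y ≠ v ∧ y ≠ w := by
        by_contra hno
        push_neg at hno
        have : (Finset.univ : Finset V) ⊆ {v, w} := by
          intro y _
          rcases eq_or_ne y v with rfl | h
          · simp
          · simp [hno y h]
        have := Finset.card_le_card this
        rw [Finset.card_univ] at this
        have h2 : ({v, w} : Finset V).card ≤ 2 := Finset.card_insert_le _ _ |>.trans (by simp)
        omega
      obtain ⟨p⟩ := hTc v y
      have hp := p.toPath
      obtain ⟨q, hq⟩ := hp
      cases q with
      | nil => exact hyv rfl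
      | @cons _ a _ h q' =>
        have ha : a = w := by
          have : a ∈ T.neighborSet v := h
          rwa [hw, Set.mem_singleton_iff] at this
        subst ha
        rw [SimpleGraph.Walk.cons_isPath_iff] at hq
        cases q' with
        | nil => exact hyw rfl
        | @cons _ b _ h2 q2 =>
          have hb : b = v := by
            have : b ∈ T.neighborSet a := h2
            rwa [hx, Set.mem_singleton_iff] at this
          subst hb
          exact hq.2 (by simp)
    -- D is nonempty
    have hDne : D.Nonempty := by
      have : Nonempty V := Fintype.card_pos_iff.1 (by omega)
      obtain ⟨v⟩ := this
      by_cases hv : (T.neighborSet v).ncard = 1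
      · obtain ⟨w, _, hw⟩ := key v hv
        exact ⟨w, (hmemD w).2 hw⟩
      · exact ⟨v, (hmemD v).2 hv⟩
    refine ⟨D, hDne, ?_, ?_, ?_⟩
    · -- induced connectivity
      have hne : Nonempty (↑(↑D : Set V)) := ⟨⟨hDne.choose, by simpa using hDne.choose_spec⟩⟩
      refine ⟨fun x y => ?_⟩
      obtain ⟨a, ha⟩ := x
      obtain ⟨b, hb⟩ := y
      obtain ⟨p⟩ := hTc a b
      obtain ⟨q, hq⟩ := p.toPath
      have hsupp : ∀ z ∈ q.support, z ∈ (↑D : Set V) := by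
        intro z hz
        by_cases h1 : (T.neighborSet z).ncard = 1
        · rcases interior_two_nbrs q hq hz h1 with rfl | rfl
          · exact absurd h1 ((hmemD z).1 (by exact_mod_cast ha))
          · exact absurd h1 ((hmemD z).1 (by exact_mod_cast hb))
        · exact_mod_cast (hmemD z).2 h1
      have := reach_induce q hsupp (by exact_mod_cast ha) (by exact_mod_cast hb)
      exact this.mono (fun u v huv => by
        simp only [comap_adj, Function.Embedding.coe_subtype] at huv ⊢
        exact hTG huv)
    · -- domination
      intro v hv
      have h1 : (T.neighborSet v).ncard = 1 := by
        by_contra h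
        exact hv ((hmemD v).2 h)
      obtain ⟨w, hw, hw1⟩ := key v h1
      refine ⟨w, (hmemD w).2 hw1, hTG ?_⟩
      have : w ∈ T.neighborSet v := by rw [hw]; rfl
      exact this
    · -- cardinality
      have hcompl : Dᶜ.card = ({v : V | (T.neighborSet v).ncard = 1} : Set V).ncard := by
        rw [Set.ncard_eq_toFinset_card']
        congr 1
        ext v
        simp [hD, Set.mem_toFinset]
      have hsum : D.card + Dᶜ.card = Fintype.card V := by
        rw [Finset.card_add_card_compl]
      omega
  · -- backward direction
    classical
    rintro ⟨D, hDne, hDconn, hdom, hDcard⟩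
    -- choose for each vertex outside D a neighbor inside D
    have hf : ∀ v : V, ∃ w : V, v ∉ D → (w ∈ D ∧ G.Adj v w) := by
      intro v
      by_cases hv : v ∈ D
      · exact ⟨v, fun h => absurd hv h⟩
      · obtain ⟨w, hw1, hw2⟩ := hdom v hv
        exact ⟨w, fun _ => ⟨hw1, hw2⟩⟩
    choose f hfD using hf
    -- the auxiliary graph H
    set H : SimpleGraph V := {
      Adj := fun a b => (a ∈ D ∧ b ∈ D ∧ G.Adj a b) ∨ (a ∉ D ∧ b = f a) ∨ (b ∉ D ∧ a = f b)
      symm := by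
        constructor
        rintro a b (⟨h1, h2, h3⟩ | ⟨h1, h2⟩ | ⟨h1, h2⟩)
        · exact Or.inl ⟨h2, h1, h3.symm⟩
        · exact Or.inr (Or.inr ⟨h1, h2⟩)
        · exact Or.inr (Or.inl ⟨h1, h2⟩)
      loopless := by
        constructor
        rintro a (⟨_, _, h3⟩ | ⟨h1, h2⟩ | ⟨h1, h2⟩)
        · exact G.loopless.irrefl a h3
        · exact h1 (h2 ▸ (hfD a h1).1)
        · exact h1 (h2 ▸ (hfD a h1).1) } with hH
    have hHG : H ≤ G := by
      rintro a b (⟨_, _, h3⟩ | ⟨h1, h2⟩ | ⟨h1, h2⟩)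
      · exact h3
      · exact h2 ▸ (hfD a h1).2
      · exact (h2 ▸ (hfD b h1).2).symm
    -- every vertex outside D has exactly the neighbor f v in H
    have hnbrH : ∀ v : V, v ∉ D → H.neighborSet v = {f v} := by
      intro v hv
      ext b
      simp only [mem_neighborSet, Set.mem_singleton_iff, hH]
      constructor
      · rintro (⟨h1, _, _⟩ | ⟨_, h2⟩ | ⟨h1, h2⟩)
        · exact absurd h1 hv
        · exact h2
        · exact absurd (h2 ▸ (hfD b h1).1) hv
      · rintro rfl
        exact Or.inr (Or.inl ⟨hv, rfl⟩)
    -- H is connected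
    have hHconn : H.Connected := by
      have hne : Nonempty V := Fintype.card_pos_iff.1 (by omega)
      rw [connected_iff]
      refine ⟨?_, hne⟩
      have hD2H : ∀ a ∈ D, ∀ b ∈ D, H.Reachable a b := by
        intro a ha b hb
        have hr := hDconn.preconnected ⟨a, by exact_mod_cast ha⟩ ⟨b, by exact_mod_cast hb⟩
        let φ : G.induce (↑D : Set V) →g H :=
          ⟨Subtype.val, fun {x y} hxy => Or.inl ⟨x.2, y.2, hxy⟩⟩
        exact hr.map φ
      have hanchor : ∀ v : V, ∃ d ∈ D, H.Reachable v d := by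
        intro v
        by_cases hv : v ∈ D
        · exact ⟨v, hv, Reachable.refl v⟩
        · exact ⟨f v, (hfD v hv).1, Adj.reachable (Or.inr (Or.inl ⟨hv, rfl⟩))⟩
      intro a b
      obtain ⟨da, hda, hra⟩ := hanchor a
      obtain ⟨db, hdb, hrb⟩ := hanchor b
      exact hra.trans ((hD2H da hda db hdb).trans hrb.symm)
    -- take a spanning tree of H
    obtain ⟨T, hTH, hTc, hTa⟩ := exists_tree_le H hHconn
    refine ⟨T, le_trans hTH hHG, hTc, hTa, ?_⟩
    -- every vertex outside D is a leaf of T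
    have hleaf : ∀ v : V, v ∉ D → (T.neighborSet v).ncard = 1 := by
      intro v hv
      have hsub : T.neighborSet v ⊆ {f v} := by
        rw [← hnbrH v hv]
        exact fun w hw => hTH hw
      obtain ⟨w, hw⟩ := nbr_nonempty hTc (by omega) v
      have hw' : w = f v := hsub hw
      have : T.neighborSet v = {f v} := by
        apply Set.eq_singleton_iff_unique_mem.2
        exact ⟨hw' ▸ hw, fun y hy => hsub hy⟩
      rw [this, Set.ncard_singleton]
    -- count leaves
    have hsub : (↑(Dᶜ) : Set V) ⊆ {v : V | (T.neighborSet v).ncard = 1} := by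
      intro v hv
      simp only [Finset.coe_compl, Set.mem_compl_iff, Finset.mem_coe] at hv
      exact hleaf v hv
    have h1 : (↑(Dᶜ) : Set V).ncard ≤ ({v : V | (T.neighborSet v).ncard = 1} : Set V).ncard :=
      Set.ncard_le_ncard hsub (Set.toFinite _)
    have h2 : (↑(Dᶜ) : Set V).ncard = (Dᶜ : Finset V).card := Set.ncard_coe_finset _
    have h3 : (Dᶜ : Finset V).card = Fintype.card V - D.card := by
      rw [Finset.card_compl]
    omega
end
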